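/- Let θ : ℂ → ℝ be Lipschitz continuous with Lipschitz constant L, satisfying 0 ≤ θ(z) ≤ 1 for all z ∈ ℂ, θ(z) = 1 for |z| ≤ 1, and θ(z) = 0 for |z| ≥ 2. Define g₂(z) = (1 − θ(z)) · z · log(|z|²), with g₂(0) = 0. Then there exists a constant C > 0, depending only on L, such that |g₂(z) − g₂(w)| ≤ C (log⁺|z| + log⁺|w|) |z − w| for all z, w ∈ ℂ, where log⁺ t = max(log t, 0) for t > 0 and log⁺ 0 = 0. -/

import Mathlib

set_option maxHeartbeats 1000000
open Complex Real

private lemma core_est (L : NNReal) (θ : ℂ → ℝ) (hθ : LipschitzWith L θ)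
    (h01 : ∀ z : ℂ, 0 ≤ θ z ∧ θ z ≤ 1)
    (h1 : ∀ z : ℂ, ‖z‖ ≤ 1 → θ z = 1)
    (h2 : ∀ z : ℂ, 2 ≤ ‖z‖ → θ z = 0)
    (z w : ℂ) (hba : ‖w‖ ≤ ‖z‖) :
    ‖((1 : ℝ) - θ z : ℝ) * z * (Real.log (‖z‖ ^ 2) : ℂ)
        - ((1 : ℝ) - θ w : ℝ) * w * (Real.log (‖w‖ ^ 2) : ℂ)‖
      ≤ (8 * ((L : ℝ) + 1)) * (max (Real.log (‖z‖)) 0 + max (Real.log (‖w‖)) 0)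
          * ‖z - w‖ := by
  set a := ‖z‖ with ha
  set b := ‖w‖ with hb
  set d := ‖z - w‖ with hd
  have hL0 : (0 : ℝ) ≤ L := L.coe_nonneg
  have hd0 : 0 ≤ d := norm_nonneg _
  have hb0 : 0 ≤ b := norm_nonneg _
  have habd : a - b ≤ d := by
    have := abs_norm_sub_norm_le z w
    have h := abs_le.mp this
    linarith [h.1, h.2]
  have hmax0 : (0:ℝ) ≤ max (Real.log b) 0 := le_max_right _ _
  have hmaxa0 : (0:ℝ) ≤ max (Real.log a) 0 := le_max_right _ _
  rcases le_or_gt a 1 with hA | hA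
  · -- both inside unit disc → both terms vanish
    rw [h1 z hA, h1 w (hba.trans hA)]
    simp only [sub_self]
    push_cast
    simp only [zero_mul, sub_zero, norm_zero]
    positivity
  · -- 1 < a
    have ha1 : (1:ℝ) ≤ a := hA.le
    have ha0 : 0 < a := lt_trans one_pos hA
    have hla0 : 0 ≤ Real.log a := Real.log_nonneg ha1
    set la := Real.log a with hla
    have hmaxa : max la 0 = la := max_eq_left hla0
    have hlasum : la ≤ max la 0 + max (Real.log b) 0 := by
      rw [hmaxa]; linarith
    -- Lipschitz in terms of abs
    have hlip : |θ z - θ w| ≤ (L : ℝ) * d := by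
      have := hθ.dist_le_mul z w
      rwa [Real.dist_eq, Complex.dist_eq] at this
    -- bound on 1 - θ z
    have ht1a : 0 ≤ 1 - θ z := by linarith [(h01 z).2]
    have ht1b : 1 - θ z ≤ 1 := by linarith [(h01 z).1]
    have hlog_ge : 1 - a⁻¹ ≤ la := by
      have h := Real.log_le_sub_one_of_pos (show (0:ℝ) < a⁻¹ by positivity)
      rw [Real.log_inv] at h
      linarith
    have ha1le : a - 1 ≤ a * la := by
      have : (1 - a⁻¹) * a ≤ la * a := by
        apply mul_le_mul_of_nonneg_right hlog_ge (le_of_lt ha0)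
      calc a - 1 = (1 - a⁻¹) * a := by field_simp
        _ ≤ la * a := this
        _ = a * la := mul_comm _ _
    have htheta_near : a ≤ 2 → 1 - θ z ≤ (L : ℝ) * (a - 1) := by
      intro ha2
      have hu : ‖(↑(a⁻¹) : ℂ) * z‖ ≤ 1 := by
        rw [norm_mul, Complex.norm_real, Real.norm_eq_abs, _root_.abs_of_pos (show (0:ℝ) < a⁻¹ by positivity)]
        rw [← ha, inv_mul_cancel₀ (ne_of_gt ha0)]
      have hθu : θ ((↑(a⁻¹) : ℂ) * z) = 1 := h1 _ hu
      have hl : |θ ((↑(a⁻¹) : ℂ) * z) - θ z| ≤ (L : ℝ) * ‖(↑(a⁻¹) : ℂ) * z - z‖ := by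
        have := hθ.dist_le_mul ((↑(a⁻¹) : ℂ) * z) z
        rwa [Real.dist_eq, Complex.dist_eq] at this
      have habs : ‖(↑(a⁻¹) : ℂ) * z - z‖ = a - 1 := by
        have : (↑(a⁻¹) : ℂ) * z - z = (↑(a⁻¹ - 1) : ℝ) * z := by push_cast; ring
        rw [this, norm_mul, Complex.norm_real, Real.norm_eq_abs, ← ha]
        have hinva : a⁻¹ * a = 1 := inv_mul_cancel₀ (ne_of_gt ha0)
        have hinv1 : a⁻¹ - 1 ≤ 0 := by nlinarith
        rw [_root_.abs_of_nonpos hinv1]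
        ring_nf
        nlinarith
      rw [hθu, habs] at hl
      calc 1 - θ z ≤ |1 - θ z| := le_abs_self _
        _ ≤ (L:ℝ) * (a - 1) := hl
    have ht1 : 1 - θ z ≤ (2 * (L:ℝ) + 2) * la := by
      rcases le_or_gt a 2 with ha2 | ha2
      · have := htheta_near ha2
        have h2la : a - 1 ≤ 2 * la := by nlinarith
        nlinarith
      · have : (1:ℝ)/2 ≤ la := by
          have := Real.log_two_gt_d9
          have h2a : Real.log 2 ≤ la := Real.log_le_log (by norm_num) ha2.le
          linarith
        nlinarith
    rcases le_or_gt b 1 with hB | hB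
    · -- w inside the unit disc: second term vanishes
      have hY0 : (((1 : ℝ) - θ w : ℝ) : ℂ) * w * (Real.log (b ^ 2) : ℂ) = 0 := by
        rw [h1 w hB]; push_cast; ring
      rw [hY0, sub_zero]
      rw [norm_mul, norm_mul, Complex.norm_real, Real.norm_eq_abs, Complex.norm_real, Real.norm_eq_abs, ← ha]
      rw [_root_.abs_of_nonneg ht1a]
      have hlog2 : Real.log (a ^ 2) = 2 * la := by
        rw [Real.log_pow]; push_cast; ring
      rw [hlog2, _root_.abs_of_nonneg (by linarith)]
      have had1 : a - 1 ≤ d := by linarith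
      have hkey : (1 - θ z) * (2 * a) ≤ (4 * (L:ℝ) + 4) * d := by
        rcases le_or_gt a 2 with ha2 | ha2
        · have := htheta_near ha2
          nlinarith
        · have hda : a / 2 ≤ d := by linarith
          nlinarith
      calc (1 - θ z) * a * (2 * la) = ((1 - θ z) * (2 * a)) * la := by ring
        _ ≤ ((4 * (L:ℝ) + 4) * d) * la := by
            apply mul_le_mul_of_nonneg_right hkey hla0
        _ ≤ 8 * ((L:ℝ) + 1) * (max la 0 + max (Real.log b) 0) * d := by
            rw [hmaxa]
            nlinarith [mul_nonneg (mul_nonneg hL0 hla0) hd0, mul_nonneg hla0 hd0,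
              mul_nonneg hmax0 hd0, mul_nonneg (mul_nonneg hL0 hmax0) hd0]
    · -- 1 < b ≤ a
      have hb1 : (1:ℝ) ≤ b := hB.le
      have hb0' : (0:ℝ) < b := lt_trans one_pos hB
      set lb := Real.log b with hlb
      have hlb0 : 0 ≤ lb := Real.log_nonneg hb1
      have hlble : lb ≤ la := Real.log_le_log hb0' hba
      have ht2a : 0 ≤ 1 - θ w := by linarith [(h01 w).2]
      -- decomposition
      set X := (((1 : ℝ) - θ z : ℝ) : ℂ) * z * (Real.log (a ^ 2) : ℂ) with hX
      set Y := (((1 : ℝ) - θ w : ℝ) : ℂ) * w * (Real.log (b ^ 2) : ℂ) with hY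
      have hdecomp : X - Y =
          (((1:ℝ) - θ z : ℝ) : ℂ) * (z - w) * (Real.log (a ^ 2) : ℂ)
          + (((1:ℝ) - θ z : ℝ) : ℂ) * w * ((Real.log (a ^ 2) - Real.log (b ^ 2) : ℝ) : ℂ)
          + ((θ w - θ z : ℝ) : ℂ) * w * (Real.log (b ^ 2) : ℂ) := by
        rw [hX, hY]; push_cast; ring
      have hloga2 : Real.log (a ^ 2) = 2 * la := by rw [Real.log_pow]; push_cast; ring
      have hlogb2 : Real.log (b ^ 2) = 2 * lb := by rw [Real.log_pow]; push_cast; ring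
      rw [hdecomp]
      set A := (((1:ℝ) - θ z : ℝ) : ℂ) * (z - w) * (Real.log (a ^ 2) : ℂ) with hAdef
      set B := (((1:ℝ) - θ z : ℝ) : ℂ) * w * ((Real.log (a ^ 2) - Real.log (b ^ 2) : ℝ) : ℂ)
        with hBdef
      set Cc := ((θ w - θ z : ℝ) : ℂ) * w * (Real.log (b ^ 2) : ℂ) with hCdef
      have htri : ‖A + B + Cc‖ ≤ ‖A‖ + ‖B‖ + ‖Cc‖ := by
        calc ‖A + B + Cc‖ ≤ ‖A + B‖ + ‖Cc‖ :=
              norm_add_le _ _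
          _ ≤ ‖A‖ + ‖B‖ + ‖Cc‖ := by
              linarith [norm_add_le A B]
      refine le_trans htri ?_
      -- now bound each of the three terms
      have hAbd : ‖A‖ ≤ 2 * la * d := by
        rw [hAdef, norm_mul, norm_mul, Complex.norm_real, Real.norm_eq_abs, Complex.norm_real, Real.norm_eq_abs, ← hd]
        rw [_root_.abs_of_nonneg ht1a, hloga2, _root_.abs_of_nonneg (by linarith)]
        calc (1 - θ z) * d * (2 * la) = (1 - θ z) * (2 * (la * d)) := by ring
          _ ≤ 1 * (2 * (la * d)) := by
              apply mul_le_mul_of_nonneg_right ht1b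
              positivity
          _ = 2 * la * d := by ring
      have hBkey : b * (la - lb) ≤ d := by
        have h := Real.log_le_sub_one_of_pos (show (0:ℝ) < a / b by positivity)
        rw [Real.log_div (ne_of_gt ha0) (ne_of_gt hb0')] at h
        have : b * (la - lb) ≤ b * (a / b - 1) := by
          apply mul_le_mul_of_nonneg_left h (le_of_lt hb0')
        have heq : b * (a / b - 1) = a - b := by field_simp
        linarith
      have hBbd : ‖B‖ ≤ (2 * (L:ℝ) + 2) * la * (2 * d) := by
        rw [hBdef, norm_mul, norm_mul, Complex.norm_real, Real.norm_eq_abs, Complex.norm_real, Real.norm_eq_abs, ← hb]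
        rw [_root_.abs_of_nonneg ht1a, hloga2, hlogb2, _root_.abs_of_nonneg (by linarith)]
        have hstep : b * (2 * la - 2 * lb) ≤ 2 * d := by linarith [hBkey]
        have h1' : (1 - θ z) * b * (2 * la - 2 * lb) ≤ (1 - θ z) * (2 * d) := by
          calc (1 - θ z) * b * (2 * la - 2 * lb) = (1 - θ z) * (b * (2 * la - 2 * lb)) := by ring
            _ ≤ (1 - θ z) * (2 * d) := mul_le_mul_of_nonneg_left hstep ht1a
        have h2' : (1 - θ z) * (2 * d) ≤ (2 * (L:ℝ) + 2) * la * (2 * d) := by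
          apply mul_le_mul_of_nonneg_right ht1 (by positivity)
        linarith
      have hCbd : ‖Cc‖ ≤ 4 * (L:ℝ) * la * d := by
        rcases le_or_gt 2 b with hb2 | hb2
        · rw [hCdef, h2 w hb2, h2 z (le_trans hb2 hba)]
          simp only [sub_self, Complex.ofReal_zero, zero_mul, norm_zero]
          positivity
        · rw [hCdef, norm_mul, norm_mul, Complex.norm_real, Real.norm_eq_abs, Complex.norm_real, Real.norm_eq_abs, ← hb]
          rw [hlogb2, _root_.abs_of_nonneg (show (0:ℝ) ≤ 2 * lb by linarith)]
          have h1' : |θ w - θ z| * b * (2 * lb) ≤ ((L:ℝ) * d) * 2 * (2 * la) := by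
            have habs0 : 0 ≤ |θ w - θ z| := abs_nonneg _
            have hl : |θ w - θ z| ≤ (L:ℝ) * d := by
              have := hθ.dist_le_mul w z
              rw [Real.dist_eq, Complex.dist_eq] at this
              calc |θ w - θ z| ≤ (L:ℝ) * ‖w - z‖ := this
                _ = (L:ℝ) * d := by rw [hd, norm_sub_rev]
            have hld0 : 0 ≤ (L:ℝ) * d := mul_nonneg hL0 hd0
            calc |θ w - θ z| * b * (2 * lb) ≤ ((L:ℝ) * d) * b * (2 * lb) := by
                  apply mul_le_mul_of_nonneg_right
                  · exact mul_le_mul_of_nonneg_right hl hb0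
                  · linarith
              _ ≤ ((L:ℝ) * d) * 2 * (2 * lb) := by
                  apply mul_le_mul_of_nonneg_right _ (by linarith)
                  exact mul_le_mul_of_nonneg_left hb2.le hld0
              _ ≤ ((L:ℝ) * d) * 2 * (2 * la) := by
                  apply mul_le_mul_of_nonneg_left (by linarith) (by positivity)
          linarith [h1']
      have hsum : max la 0 + max lb 0 = la + lb := by
        rw [hmaxa, max_eq_left hlb0]
      rw [hsum]
      calc ‖A‖ + ‖B‖ + ‖Cc‖
          ≤ 2 * la * d + (2 * (L:ℝ) + 2) * la * (2 * d) + 4 * (L:ℝ) * la * d := by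
            linarith
        _ ≤ 8 * ((L:ℝ) + 1) * (la + lb) * d := by
            nlinarith [mul_nonneg hla0 hd0, mul_nonneg (mul_nonneg hL0 hla0) hd0,
              mul_nonneg hlb0 hd0, mul_nonneg (mul_nonneg hL0 hlb0) hd0]

/-- Let `θ : ℂ → ℝ` be `L`-Lipschitz, `0 ≤ θ ≤ 1`, `θ = 1` on `{|z| ≤ 1}` and `θ = 0` on
`{|z| ≥ 2}`, and set `g₂(z) = (1 - θ(z)) z log(|z|²)` (which is `0` at `z = 0`).
There is `C > 0`, depending only on `L`, with
`|g₂(z) - g₂(w)| ≤ C (log⁺|z| + log⁺|w|) |z - w|` for all `z, w`,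
where `log⁺ t = max (log t) 0`. -/
theorem g_two_log_lipschitz (L : NNReal) :
    ∃ C : ℝ, 0 < C ∧
      ∀ θ : ℂ → ℝ, LipschitzWith L θ →
        (∀ z : ℂ, 0 ≤ θ z ∧ θ z ≤ 1) →
        (∀ z : ℂ, ‖z‖ ≤ 1 → θ z = 1) →
        (∀ z : ℂ, 2 ≤ ‖z‖ → θ z = 0) →
        ∀ z w : ℂ,
          ‖((1 : ℝ) - θ z : ℝ) * z * (Real.log (‖z‖ ^ 2) : ℂ)
              - ((1 : ℝ) - θ w : ℝ) * w * (Real.log (‖w‖ ^ 2) : ℂ)‖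
            ≤ C * (max (Real.log (‖z‖)) 0 + max (Real.log (‖w‖)) 0)
                * ‖z - w‖ := by
  refine ⟨8 * ((L : ℝ) + 1), by positivity, ?_⟩
  intro θ hθ h01 h1 h2 z w
  rcases le_total (‖w‖) (‖z‖) with hle | hle
  · exact core_est L θ hθ h01 h1 h2 z w hle
  · have h := core_est L θ hθ h01 h1 h2 w z hle
    calc ‖((1 : ℝ) - θ z : ℝ) * z * (Real.log (‖z‖ ^ 2) : ℂ)
          - ((1 : ℝ) - θ w : ℝ) * w * (Real.log (‖w‖ ^ 2) : ℂ)‖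
        = ‖((1 : ℝ) - θ w : ℝ) * w * (Real.log (‖w‖ ^ 2) : ℂ)
          - ((1 : ℝ) - θ z : ℝ) * z * (Real.log (‖z‖ ^ 2) : ℂ)‖ := by
          rw [norm_sub_rev]
      _ ≤ 8 * ((L : ℝ) + 1) * (max (Real.log (‖w‖)) 0 + max (Real.log (‖z‖)) 0)
          * ‖w - z‖ := h
      _ = 8 * ((L : ℝ) + 1) * (max (Real.log (‖z‖)) 0 + max (Real.log (‖w‖)) 0)
          * ‖z - w‖ := by
          rw [norm_sub_rev w z, add_comm (max (Real.log (‖w‖)) 0)]
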